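/- For n ∈ {6,4,3,2}, the sum −log(κ/n) − ∑_{j=1}^{n−1} (ω^j + ω^{−j} − 1) log(1 − ω^j) equals 0, where ω = e^{2πi/n} and κ = 432, 64, 27, 16 respectively for n = 6, 4, 3, 2. -/

import Mathlib

open Complex

private lemma log_add_log_conj' (z : ℂ) (hz : 0 < z.re) :
    Complex.log z + Complex.log ((starRingEnd ℂ) z) = (Real.log (Complex.normSq z) : ℂ) := by
  rw [Complex.log_conj z (by rw [ne_eq, Complex.arg_eq_pi_iff]; rintro ⟨h1, -⟩; linarith),
    Complex.add_conj, Complex.log_re]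
  rw [show Complex.normSq z = ‖z‖ ^ 2 from (Complex.sq_norm z).symm, Real.log_pow]
  push_cast; ring

/-- For `n ∈ {6,4,3,2}` with `κ = 432, 64, 27, 16` respectively,
`−log(κ/n) − ∑_{j=1}^{n−1} (ω^j + ω^{−j} − 1) log(1 − ω^j) = 0`, where `ω = e^{2πi/n}`
and `log` is the principal branch of the complex logarithm. -/
theorem sum_root_of_unity_log_eq_zero (n : ℕ) (κ : ℝ)
    (h : (n, κ) = (6, 432) ∨ (n, κ) = (4, 64) ∨ (n, κ) = (3, 27) ∨ (n, κ) = (2, 16))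
    (ω : ℂ) (hω : ω = Complex.exp (2 * Real.pi * Complex.I / n)) :
    -Complex.log ((κ : ℂ) / (n : ℂ)) -
        ∑ j ∈ Finset.Icc 1 (n - 1),
          (ω ^ (j : ℕ) + ω ^ (-(j : ℤ)) - 1) * Complex.log (1 - ω ^ (j : ℕ)) = 0 := by
  have l2 : Complex.log 2 = ((Real.log 2 : ℝ) : ℂ) := by
    rw [show (2:ℂ) = ((2:ℝ):ℂ) by norm_num, Complex.ofReal_log (by norm_num)]
  simp only [Prod.mk.injEq] at h
  rcases h with ⟨rfl, rfl⟩ | ⟨rfl, rfl⟩ | ⟨rfl, rfl⟩ | ⟨rfl, rfl⟩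
  · -- n = 6
    have hs3 : Real.sqrt 3 ^ 2 = 3 := Real.sq_sqrt (by norm_num)
    have hs : ((Real.sqrt 3 : ℝ) : ℂ) ^ 2 = 3 := by
      rw [← Complex.ofReal_pow, hs3]; norm_num
    have hω3 : ω = ((1/2 : ℝ) : ℂ) + ((Real.sqrt 3 / 2 : ℝ) : ℂ) * Complex.I := by
      rw [hω, show (2 * (Real.pi:ℝ) * Complex.I / ((6:ℕ):ℂ)) = ((Real.pi/3 : ℝ):ℂ) * Complex.I
        by push_cast; ring, Complex.exp_mul_I, ← Complex.ofReal_cos, ← Complex.ofReal_sin,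
        Real.cos_pi_div_three, Real.sin_pi_div_three]
    have h2 : ω ^ 2 = ((-1/2 : ℝ) : ℂ) + ((Real.sqrt 3 / 2 : ℝ) : ℂ) * Complex.I := by
      rw [hω3]; push_cast
      linear_combination (Complex.I^2/4) * hs + (3/4 : ℂ) * Complex.I_sq
    have h3 : ω ^ 3 = -1 := by
      rw [hω3]; push_cast
      linear_combination ((3/8 : ℂ)*Complex.I^2 + ((Real.sqrt 3:ℝ):ℂ)/8*Complex.I^3) * hs
        + ((9/8 : ℂ) + ((Real.sqrt 3:ℝ):ℂ)*3/8*Complex.I) * Complex.I_sq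
    have h4 : ω ^ 4 = ((-1/2 : ℝ) : ℂ) - ((Real.sqrt 3 / 2 : ℝ) : ℂ) * Complex.I := by
      rw [show ω^4 = (ω^2)^2 by ring, h2]; push_cast
      linear_combination (Complex.I^2/4) * hs + (3/4 : ℂ) * Complex.I_sq
    have h5 : ω ^ 5 = ((1/2 : ℝ) : ℂ) - ((Real.sqrt 3 / 2 : ℝ) : ℂ) * Complex.I := by
      rw [show ω^5 = ω^2 * ω^3 by ring, h2, h3]; push_cast; ring
    have h6 : ω ^ 6 = 1 := by rw [show ω^6 = (ω^3)^2 by ring, h3]; norm_num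
    have hi1 : ω ^ (-(1:ℤ)) = ω ^ 5 := by
      rw [zpow_neg, zpow_one]
      exact inv_eq_of_mul_eq_one_right (by rw [show ω * ω^5 = ω^6 by ring, h6])
    have hi2 : ω ^ (-(2:ℤ)) = ω ^ 4 := by
      rw [zpow_neg, show ((2:ℤ)) = ((2:ℕ):ℤ) from rfl, zpow_natCast]
      exact inv_eq_of_mul_eq_one_right (by rw [show ω^2 * ω^4 = ω^6 by ring, h6])
    have hi3 : ω ^ (-(3:ℤ)) = ω ^ 3 := by
      rw [zpow_neg, show ((3:ℤ)) = ((3:ℕ):ℤ) from rfl, zpow_natCast]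
      exact inv_eq_of_mul_eq_one_right (by rw [show ω^3 * ω^3 = ω^6 by ring, h6])
    have hi4 : ω ^ (-(4:ℤ)) = ω ^ 2 := by
      rw [zpow_neg, show ((4:ℤ)) = ((4:ℕ):ℤ) from rfl, zpow_natCast]
      exact inv_eq_of_mul_eq_one_right (by rw [show ω^4 * ω^2 = ω^6 by ring, h6])
    have hi5 : ω ^ (-(5:ℤ)) = ω := by
      rw [zpow_neg, show ((5:ℤ)) = ((5:ℕ):ℤ) from rfl, zpow_natCast]
      exact inv_eq_of_mul_eq_one_right (by rw [show ω^5 * ω = ω^6 by ring, h6])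
    have hconj : (starRingEnd ℂ) (1 - ω^2) = 1 - ω^4 := by
      rw [h2, h4, map_sub, map_one, map_add, map_mul, Complex.conj_ofReal,
        Complex.conj_ofReal, Complex.conj_I]; ring
    have key : Complex.log (1 - ω^2) + Complex.log (1 - ω^4) = ((Real.log 3 : ℝ) : ℂ) := by
      have := log_add_log_conj' (1 - ω^2) (by rw [h2]; simp; norm_num)
      rw [hconj] at this
      rw [this, show Complex.normSq (1 - ω^2) = 3 by
        rw [h2]; simp [Complex.normSq_apply]; nlinarith [hs3]]
    have hlog2 : Complex.log (1 - ω^3) = ((Real.log 2 : ℝ) : ℂ) := by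
      rw [h3, show (1 : ℂ) - (-1) = 2 by norm_num, l2]
    rw [show (6:ℕ) - 1 = 5 from rfl,
      show (Finset.Icc 1 5 : Finset ℕ) = {1,2,3,4,5} from rfl,
      Finset.sum_insert (by decide), Finset.sum_insert (by decide),
      Finset.sum_insert (by decide), Finset.sum_insert (by decide), Finset.sum_singleton]
    push_cast
    rw [hi1, hi2, hi3, hi4, hi5, hlog2]
    rw [show (432:ℂ)/(6:ℂ) = ((72:ℝ):ℂ) by norm_num,
      ← Complex.ofReal_log (show (0:ℝ) ≤ 72 by norm_num),
      show Real.log 72 = 3 * Real.log 2 + 2 * Real.log 3 by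
        rw [show (72:ℝ) = 2^3 * 3^2 by norm_num,
          Real.log_mul (by positivity) (by positivity), Real.log_pow, Real.log_pow]
        push_cast; ring]
    have c1 : ω + ω ^ 5 - 1 = 0 := by rw [h5, hω3]; push_cast; ring
    have c2 : ω ^ 2 + ω ^ 4 - 1 = -2 := by rw [h2, h4]; push_cast; ring
    have c3 : ω ^ 3 + ω ^ 3 - 1 = -3 := by rw [h3]; ring
    push_cast
    linear_combination -Complex.log (1 - ω^1) * c1 - Complex.log (1 - ω^5) * c1 -
      Complex.log (1 - ω^2) * c2 - ((Real.log 2 : ℝ) : ℂ) * c3 -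
      Complex.log (1 - ω^4) * c2 + 2 * key
  · -- n = 4
    have hω4 : ω = Complex.I := by
      rw [hω, show (2 * (Real.pi:ℝ) * Complex.I / ((4:ℕ):ℂ)) = ((Real.pi/2 : ℝ):ℂ) * Complex.I
        by push_cast; ring, Complex.exp_mul_I, ← Complex.ofReal_cos, ← Complex.ofReal_sin,
        Real.cos_pi_div_two, Real.sin_pi_div_two]
      push_cast; ring
    have h2 : ω ^ 2 = -1 := by rw [hω4]; exact Complex.I_sq
    have h3 : ω ^ 3 = -Complex.I := by
      rw [hω4]; linear_combination Complex.I * Complex.I_sq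
    have h4 : ω ^ 4 = 1 := by
      rw [hω4]; linear_combination (Complex.I^2 - 1) * Complex.I_sq
    have hi1 : ω ^ (-(1:ℤ)) = ω ^ 3 := by
      rw [zpow_neg, zpow_one]
      exact inv_eq_of_mul_eq_one_right (by rw [show ω * ω^3 = ω^4 by ring, h4])
    have hi2 : ω ^ (-(2:ℤ)) = ω ^ 2 := by
      rw [zpow_neg, show ((2:ℤ)) = ((2:ℕ):ℤ) from rfl, zpow_natCast]
      exact inv_eq_of_mul_eq_one_right (by rw [show ω^2 * ω^2 = ω^4 by ring, h4])
    have hi3 : ω ^ (-(3:ℤ)) = ω := by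
      rw [zpow_neg, show ((3:ℤ)) = ((3:ℕ):ℤ) from rfl, zpow_natCast]
      exact inv_eq_of_mul_eq_one_right (by rw [show ω^3 * ω = ω^4 by ring, h4])
    have hconj : (starRingEnd ℂ) (1 - ω) = 1 - ω ^ 3 := by
      rw [h3, hω4, map_sub, map_one, Complex.conj_I]
    have key : Complex.log (1 - ω) + Complex.log (1 - ω^3) = ((Real.log 2 : ℝ) : ℂ) := by
      have := log_add_log_conj' (1 - ω) (by rw [hω4]; simp)
      rw [hconj] at this
      rw [this, show Complex.normSq (1 - ω) = 2 by
        rw [hω4]; simp [Complex.normSq_apply]; norm_num]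
    have hlog2 : Complex.log (1 - ω^2) = ((Real.log 2 : ℝ) : ℂ) := by
      rw [h2, show (1 : ℂ) - (-1) = 2 by norm_num, l2]
    rw [show (4:ℕ) - 1 = 3 from rfl,
      show (Finset.Icc 1 3 : Finset ℕ) = {1,2,3} from rfl,
      Finset.sum_insert (by decide), Finset.sum_insert (by decide), Finset.sum_singleton]
    push_cast
    rw [hi1, hi2, hi3, hlog2]
    rw [show (64:ℂ)/(4:ℂ) = ((16:ℝ):ℂ) by norm_num,
      ← Complex.ofReal_log (show (0:ℝ) ≤ 16 by norm_num),
      show Real.log 16 = 4 * Real.log 2 by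
        rw [show (16:ℝ) = 2^4 by norm_num, Real.log_pow]; push_cast; ring]
    have c1 : ω + ω ^ 3 - 1 = -1 := by rw [h3, hω4]; ring
    have c2 : ω ^ 2 + ω ^ 2 - 1 = -3 := by rw [h2]; ring
    push_cast
    simp only [pow_one]
    linear_combination -Complex.log (1 - ω) * c1 - ((Real.log 2 : ℝ) : ℂ) * c2 -
      Complex.log (1 - ω^3) * c1 + key
  · -- n = 3
    have hs3 : Real.sqrt 3 ^ 2 = 3 := Real.sq_sqrt (by norm_num)
    have hs : ((Real.sqrt 3 : ℝ) : ℂ) ^ 2 = 3 := by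
      rw [← Complex.ofReal_pow, hs3]; norm_num
    have hω3 : ω = ((-1/2 : ℝ) : ℂ) + ((Real.sqrt 3 / 2 : ℝ) : ℂ) * Complex.I := by
      rw [hω, show (2 * (Real.pi:ℝ) * Complex.I / ((3:ℕ):ℂ)) = ((2*Real.pi/3 : ℝ):ℂ) * Complex.I
        by push_cast; ring, Complex.exp_mul_I, ← Complex.ofReal_cos, ← Complex.ofReal_sin,
        show (2*Real.pi/3 : ℝ) = Real.pi - Real.pi/3 by ring,
        Real.cos_pi_sub, Real.sin_pi_sub, Real.cos_pi_div_three, Real.sin_pi_div_three]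
      push_cast; ring
    have h2 : ω ^ 2 = ((-1/2 : ℝ) : ℂ) - ((Real.sqrt 3 / 2 : ℝ) : ℂ) * Complex.I := by
      rw [hω3]; push_cast
      linear_combination (Complex.I^2/4) * hs + (3/4 : ℂ) * Complex.I_sq
    have h3 : ω ^ 3 = 1 := by
      rw [hω3]; push_cast
      linear_combination (-(3/8 : ℂ)*Complex.I^2 + ((Real.sqrt 3:ℝ):ℂ)/8*Complex.I^3) * hs
        + (-(9/8 : ℂ) + ((Real.sqrt 3:ℝ):ℂ)*3/8*Complex.I) * Complex.I_sq
    have hi1 : ω ^ (-(1:ℤ)) = ω ^ 2 := by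
      rw [zpow_neg, zpow_one]
      exact inv_eq_of_mul_eq_one_right (by rw [show ω * ω^2 = ω^3 by ring, h3])
    have hi2 : ω ^ (-(2:ℤ)) = ω := by
      rw [zpow_neg, show ((2:ℤ)) = ((2:ℕ):ℤ) from rfl, zpow_natCast]
      exact inv_eq_of_mul_eq_one_right (by rw [show ω^2 * ω = ω^3 by ring, h3])
    have hconj : (starRingEnd ℂ) (1 - ω) = 1 - ω ^ 2 := by
      rw [h2, hω3, map_sub, map_one, map_add, map_mul, Complex.conj_ofReal,
        Complex.conj_ofReal, Complex.conj_I]; ring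
    have key : Complex.log (1 - ω) + Complex.log (1 - ω^2) = ((Real.log 3 : ℝ) : ℂ) := by
      have := log_add_log_conj' (1 - ω) (by rw [hω3]; simp; norm_num)
      rw [hconj] at this
      rw [this, show Complex.normSq (1 - ω) = 3 by
        rw [hω3]; simp [Complex.normSq_apply]; nlinarith [hs3]]
    rw [show (3:ℕ) - 1 = 2 from rfl,
      show (Finset.Icc 1 2 : Finset ℕ) = {1,2} from rfl,
      Finset.sum_insert (by decide), Finset.sum_singleton]
    push_cast
    rw [hi1, hi2]
    rw [show (27:ℂ)/(3:ℂ) = ((9:ℝ):ℂ) by norm_num,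
      ← Complex.ofReal_log (show (0:ℝ) ≤ 9 by norm_num),
      show Real.log 9 = 2 * Real.log 3 by
        rw [show (9:ℝ) = 3^2 by norm_num, Real.log_pow]; push_cast; ring]
    have c1 : ω + ω ^ 2 - 1 = -2 := by rw [h2, hω3]; push_cast; ring
    push_cast
    simp only [pow_one]
    linear_combination -Complex.log (1 - ω) * c1 - Complex.log (1 - ω^2) * c1 + 2 * key
  · -- n = 2
    have hω' : ω = -1 := by
      rw [hω, show (2 * (Real.pi:ℝ) * Complex.I / ((2:ℕ):ℂ)) = (Real.pi:ℝ) * Complex.I by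
        push_cast; ring, Complex.exp_pi_mul_I]
    subst hω'
    rw [show (2:ℕ) - 1 = 1 from rfl, Finset.Icc_self, Finset.sum_singleton]
    norm_num
    rw [show (8:ℂ) = ((8:ℝ):ℂ) by norm_num,
      ← Complex.ofReal_log (show (0:ℝ) ≤ 8 by norm_num),
      show (8:ℝ) = 2^3 by norm_num, Real.log_pow, l2]
    push_cast; ring
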